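/- arXiv:2010.00650 — 3 statements merged into one kernel-verified Lean document; each statement's English description precedes it below -/
import Mathlib

section
/- Let V be a finite-dimensional vector space over a field with basis B = {v_1, ..., v_n}, and let S be a (possibly infinite) set of commuting endomorphisms of V such that: (1) the matrix of each T ∈ S with respect to B is in Jordan canonical form (after some fixed reordering of B), and (2) every Jordan block of size greater than 1 has eigenvalue 0. Let B' ⊆ B be the set of basis vectors that are genuine eigenvectors for every T ∈ S, and suppose the elements of B' are distinguished by their S-eigenvalues, i.e. for any distinct v_i, v_j ∈ B' there exists T ∈ S whose eigenvalues on v_i and v_j differ. If W ⊆ V is a subspace preserved by every T ∈ S, then W ≠ 0 if and only if W contains some element of B'. -/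
open Polynomial

namespace Stmt0Aux

variable {K V : Type*} [Field K] [AddCommGroup V] [Module K V]
variable {n : ℕ} (c : Module.Basis (Fin n) K V) (T : Module.End K V)

lemma apply_basis (j : Fin n) :
    T (c j) = ∑ i, LinearMap.toMatrix c c T i j • c i := by
  conv_lhs => rw [← Module.Basis.sum_repr c (T (c j))]
  refine Finset.sum_congr rfl fun i _ => ?_
  rw [LinearMap.toMatrix_apply]

variable (h0 : ∀ i j : Fin n, j ≠ i → (j : ℕ) ≠ (i : ℕ) + 1 →
    LinearMap.toMatrix c c T i j = 0)
  (h1 : ∀ i j : Fin n, (j : ℕ) = (i : ℕ) + 1 →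
    LinearMap.toMatrix c c T i j ≠ 0 →
    LinearMap.toMatrix c c T i j = 1 ∧ LinearMap.toMatrix c c T i i = 0 ∧
    LinearMap.toMatrix c c T j j = 0)

include h0 h1 in
lemma struct (j : Fin n) :
    T (c j) = LinearMap.toMatrix c c T j j • c j ∨
    ∃ i : Fin n, (j : ℕ) = (i : ℕ) + 1 ∧ LinearMap.toMatrix c c T i j = 1 ∧
      LinearMap.toMatrix c c T j j = 0 ∧ LinearMap.toMatrix c c T i i = 0 ∧
      T (c j) = c i := by
  by_cases hch : ∃ i : Fin n, (j : ℕ) = (i : ℕ) + 1 ∧ LinearMap.toMatrix c c T i j ≠ 0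
  · obtain ⟨i, hij, hne⟩ := hch
    obtain ⟨e1, eii, ejj⟩ := h1 i j hij hne
    right
    refine ⟨i, hij, e1, ejj, eii, ?_⟩
    rw [apply_basis c T j, Finset.sum_eq_single i]
    · rw [e1, one_smul]
    · intro i' _ hne'
      rcases eq_or_ne i' j with rfl | hij'
      · rw [ejj, zero_smul]
      · rw [h0 i' j hij'.symm (fun h => hne' (Fin.ext (by omega))), zero_smul]
    · exact fun h => absurd (Finset.mem_univ i) h
  · left
    rw [apply_basis c T j, Finset.sum_eq_single j]
    · intro i' _ hne'
      rcases eq_or_ne ((j : ℕ)) ((i' : ℕ) + 1) with heq | hneq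
      · rw [not_ne_iff.mp fun h => hch ⟨i', heq, h⟩, zero_smul]
      · rw [h0 i' j hne'.symm hneq, zero_smul]
    · exact fun h => absurd (Finset.mem_univ j) h

include h0 h1 in
lemma nilp : ∀ (k : ℕ) (j : Fin n), LinearMap.toMatrix c c T j j = 0 →
    (j : ℕ) < k → (T ^ k) (c j) = 0 := by
  intro k
  induction k with
  | zero => omega
  | succ k ih =>
    intro j hd hk
    have h2 : (T ^ (k + 1)) (c j) = (T ^ k) (T (c j)) := by
      rw [pow_succ]; rfl
    rcases struct c T h0 h1 j with hL | ⟨i, hij, _, _, hMii, hTc⟩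
    · rw [h2, hL, hd, zero_smul, map_zero]
    · rw [h2, hTc]
      exact ih i hMii (by omega)

include h0 in
lemma coord (x : V) (i : Fin n) :
    c.repr (T x) i = LinearMap.toMatrix c c T i i * c.repr x i +
      (if h : (i : ℕ) + 1 < n then
        LinearMap.toMatrix c c T i ⟨(i : ℕ) + 1, h⟩ * c.repr x ⟨(i : ℕ) + 1, h⟩
      else 0) := by
  have key : c.repr (T x) i = ∑ j, LinearMap.toMatrix c c T i j * c.repr x j := by
    rw [← LinearMap.toMatrix_mulVec_repr c c T x]
    rfl
  rw [key]
  split_ifs with h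
  · set i' : Fin n := ⟨(i : ℕ) + 1, h⟩ with hi'
    have hne : i ≠ i' := fun hh => by
      have := congrArg (fun z : Fin n => (z : ℕ)) hh
      simp [hi'] at this
    rw [← Finset.sum_subset (Finset.subset_univ {i, i'})
        (fun j _ hj => ?_), Finset.sum_pair hne]
    have hji : j ≠ i := fun hh => hj (by simp [hh])
    have hji' : j ≠ i' := fun hh => hj (by simp [hh])
    rw [h0 i j hji (fun hh => hji' (Fin.ext (by simpa [hi'] using hh))), zero_mul]
  · rw [Finset.sum_eq_single i]
    · rw [add_zero]
    · intro j _ hji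
      rw [h0 i j hji (fun hh => h (hh ▸ j.isLt)), zero_mul]
    · exact fun hh => absurd (Finset.mem_univ i) hh

include h0 h1 in
lemma no_chain (v : V) (γ : K) (hv : T v = γ • v) (j₀ i₀ : Fin n)
    (hj₀ : c.repr v j₀ ≠ 0) (hij : (j₀ : ℕ) = (i₀ : ℕ) + 1)
    (hne : LinearMap.toMatrix c c T i₀ j₀ ≠ 0) : False := by
  have hvc : ∀ i : Fin n, c.repr (T v) i = γ * c.repr v i := by
    intro i; rw [hv, map_smul]; rfl
  set A : ℕ → Prop := fun m => ∃ (hm : m < n) (i : Fin n), m = (i : ℕ) + 1 ∧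
    c.repr v ⟨m, hm⟩ ≠ 0 ∧ LinearMap.toMatrix c c T i ⟨m, hm⟩ ≠ 0 with hA
  have hstep : ∀ m, A m → A (m + 1) := by
    intro m ⟨hm, i, him, hr, hMne⟩
    set j : Fin n := ⟨m, hm⟩ with hj
    obtain ⟨hM1, hMii, hMjj⟩ := h1 i j him hMne
    -- equation at i
    have heqi := (hvc i).symm.trans (coord c T h0 v i)
    have hicond : (i : ℕ) + 1 < n := him ▸ hm
    rw [dif_pos hicond] at heqi
    have hji : (⟨(i : ℕ) + 1, hicond⟩ : Fin n) = j := Fin.ext (by simp [hj, him])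
    rw [hji, hMii, zero_mul, zero_add, hM1, one_mul] at heqi
    -- γ * (repr v i) = repr v j  ⇒ γ ≠ 0
    have hγ : γ ≠ 0 := by
      intro h; rw [h, zero_mul] at heqi; exact hr heqi.symm
    -- equation at j
    have heqj := (hvc j).symm.trans (coord c T h0 v j)
    rw [hMjj, zero_mul, zero_add] at heqj
    have hnz : (if h : (j : ℕ) + 1 < n then
        LinearMap.toMatrix c c T j ⟨(j : ℕ) + 1, h⟩ * c.repr v ⟨(j : ℕ) + 1, h⟩
        else 0) ≠ 0 := by
      rw [← heqj]; exact mul_ne_zero hγ hr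
    by_cases hcond : (j : ℕ) + 1 < n
    · rw [dif_pos hcond] at hnz
      have hm1 : m + 1 < n := by simpa [hj] using hcond
      refine ⟨hm1, j, by simp [hj], ?_, ?_⟩
      · have := (mul_ne_zero_iff.mp hnz).2
        convert this using 3 <;> simp [hj]
      · have := (mul_ne_zero_iff.mp hnz).1
        convert this using 3 <;> simp [hj]
    · rw [dif_neg hcond] at hnz; exact absurd rfl hnz
  have hall : ∀ k, A ((j₀ : ℕ) + k) := by
    intro k
    induction k with
    | zero => exact ⟨j₀.isLt, i₀, hij, by simpa using hj₀, by simpa using hne⟩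
    | succ k ih => exact (by omega : (j₀:ℕ) + (k+1) = ((j₀:ℕ) + k) + 1) ▸ hstep _ ih
  obtain ⟨hm, -⟩ := hall n
  omega

include h0 h1 in
lemma eigen_of_repr (v : V) (γ : K) (hv : T v = γ • v) (j : Fin n)
    (hj : c.repr v j ≠ 0) : T (c j) = γ • c j := by
  have hvc : ∀ i : Fin n, c.repr (T v) i = γ * c.repr v i := by
    intro i; rw [hv, map_smul]; rfl
  rcases struct c T h0 h1 j with hL | ⟨i, hij, hM1, _, _, _⟩
  · -- show M j j = γ
    have heqj := (hvc j).symm.trans (coord c T h0 v j)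
    have hdif : (if h : (j : ℕ) + 1 < n then
        LinearMap.toMatrix c c T j ⟨(j : ℕ) + 1, h⟩ * c.repr v ⟨(j : ℕ) + 1, h⟩
        else 0) = 0 := by
      by_cases hcond : (j : ℕ) + 1 < n
      · rw [dif_pos hcond]
        by_contra hnz
        exact no_chain c T h0 h1 v γ hv ⟨(j : ℕ) + 1, hcond⟩ j
          (mul_ne_zero_iff.mp hnz).2 rfl (mul_ne_zero_iff.mp hnz).1
      · rw [dif_neg hcond]
    rw [hdif, add_zero] at heqj
    have : LinearMap.toMatrix c c T j j = γ := by
      exact (mul_right_cancel₀ hj heqj).symm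
    rw [hL, this]
  · exact absurd (no_chain c T h0 h1 v γ hv j i hj hij (hM1 ▸ one_ne_zero)) not_false

lemma pow_smul_eigen (x : V) (γ : K) (hx : T x = γ • x) (k : ℕ) :
    (T ^ k) x = γ ^ k • x := by
  induction k with
  | zero => simp
  | succ k ih =>
    rw [pow_succ', Module.End.mul_apply, ih, map_smul, hx, smul_smul, ← pow_succ]

lemma aeval_of_eigen (x : V) (γ : K) (hx : T x = γ • x) (p : K[X]) :
    (aeval T p) x = p.eval γ • x := by
  induction p using Polynomial.induction_on' with
  | add p q hp hq => rw [map_add, LinearMap.add_apply, hp, hq, eval_add, add_smul]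
  | monomial k a =>
    rw [aeval_monomial, eval_monomial, Module.End.mul_apply,
      Module.algebraMap_end_apply, pow_smul_eigen T x γ hx, smul_smul]

lemma pow_mem_submodule (W : Submodule K V) (hW : ∀ w ∈ W, T w ∈ W) (k : ℕ)
    (w : V) (hw : w ∈ W) : (T ^ k) w ∈ W := by
  induction k with
  | zero => simpa using hw
  | succ k ih => rw [pow_succ', Module.End.mul_apply]; exact hW _ ih

lemma aeval_mem_submodule (W : Submodule K V) (hW : ∀ w ∈ W, T w ∈ W) (p : K[X])
    (w : V) (hw : w ∈ W) : (aeval T p) w ∈ W := by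
  induction p using Polynomial.induction_on' with
  | add p q hp hq => rw [map_add, LinearMap.add_apply]; exact W.add_mem hp hq
  | monomial k a =>
    rw [aeval_monomial, Module.End.mul_apply, Module.algebraMap_end_apply]
    exact W.smul_mem _ (pow_mem_submodule T W hW k w hw)

lemma aeval_comm_apply (T' : Module.End K V) (h : T' * T = T * T') (p : K[X]) (x : V) :
    T' ((aeval T p) x) = (aeval T p) (T' x) := by
  have hc : Commute T' T := h
  have : Commute T' (aeval T p) := by
    induction p using Polynomial.induction_on' with
    | add p q hp hq => rw [map_add]; exact hp.add_right hq
    | monomial k a =>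
      rw [aeval_monomial]
      exact (Algebra.commute_algebraMap_right a T').mul_right (hc.pow_right k)
  calc T' ((aeval T p) x) = (T' * aeval T p) x := rfl
    _ = (aeval T p * T') x := by rw [this]
    _ = (aeval T p) (T' x) := rfl

include h0 h1 in
lemma process (w : V) (hw : w ≠ 0) :
    ∃ p : K[X], (aeval T p) w ≠ 0 ∧ ∃ γ : K, T ((aeval T p) w) = γ • (aeval T p) w := by
  classical
  have hn : 0 < n := by
    rcases Nat.eq_zero_or_pos n with rfl | h
    · exact absurd (c.repr.injective (Finsupp.ext fun i => absurd i.isLt (by omega))) hw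
    · exact h
  by_cases hcase : ∃ j₀ : Fin n, c.repr w j₀ ≠ 0 ∧ LinearMap.toMatrix c c T j₀ j₀ ≠ 0
  · obtain ⟨j₀, hr₀, hμ⟩ := hcase
    set μ := LinearMap.toMatrix c c T j₀ j₀ with hμdef
    set D : Finset K := Finset.image (fun j => LinearMap.toMatrix c c T j j) Finset.univ with hD
    set p : K[X] := ∏ l ∈ D.erase μ, ((X : K[X]) - C l) ^ n with hp
    have hevalμ : p.eval μ ≠ 0 := by
      rw [hp, eval_prod]
      rw [Finset.prod_ne_zero_iff]
      intro l hl
      simp only [eval_pow, eval_sub, eval_X, eval_C]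
      exact pow_ne_zero _ (sub_ne_zero_of_ne (Ne.symm (Finset.mem_erase.mp hl).1))
    have hb : ∀ j : Fin n, (aeval T p) (c j) =
        (if LinearMap.toMatrix c c T j j = μ then p.eval μ else 0) • c j := by
      intro j
      by_cases hdz : LinearMap.toMatrix c c T j j = 0
      · rw [if_neg (fun h => hμ (by rw [← h, hdz]))]
        have h0D : (0 : K) ∈ D.erase μ := Finset.mem_erase.mpr
          ⟨Ne.symm hμ, Finset.mem_image.mpr ⟨j, Finset.mem_univ j, hdz⟩⟩
        have hsplit : p = (∏ l ∈ (D.erase μ).erase 0, ((X : K[X]) - C l) ^ n) *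
            ((X : K[X]) - C 0) ^ n := (Finset.prod_erase_mul _ _ h0D).symm
        have hXn : (aeval T (((X : K[X]) - C 0) ^ n)) (c j) = (T ^ n) (c j) := by
          simp
        rw [hsplit, map_mul, Module.End.mul_apply, hXn,
          nilp c T h0 h1 n j hdz j.isLt, map_zero, zero_smul]
      · have hTcj : T (c j) = LinearMap.toMatrix c c T j j • c j := by
          rcases struct c T h0 h1 j with hL | ⟨i, _, _, hjj, _, _⟩
          · exact hL
          · exact absurd hjj hdz
        rw [aeval_of_eigen T (c j) _ hTcj]
        by_cases hjμ : LinearMap.toMatrix c c T j j = μ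
        · rw [if_pos hjμ, hjμ]
        · rw [if_neg hjμ]
          have hmem : LinearMap.toMatrix c c T j j ∈ D.erase μ := Finset.mem_erase.mpr
            ⟨hjμ, Finset.mem_image.mpr ⟨j, Finset.mem_univ j, rfl⟩⟩
          have : p.eval (LinearMap.toMatrix c c T j j) = 0 := by
            rw [hp, eval_prod]
            exact Finset.prod_eq_zero hmem (by
              simp only [eval_pow, eval_sub, eval_X, eval_C, sub_self]
              exact zero_pow hn.ne' )
          rw [this, zero_smul]
    have hw' : (aeval T p) w = ∑ j, (c.repr w j *
        (if LinearMap.toMatrix c c T j j = μ then p.eval μ else 0)) • c j := by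
      conv_lhs => rw [← Module.Basis.sum_repr c w]
      rw [map_sum]
      refine Finset.sum_congr rfl fun j _ => ?_
      rw [map_smul, hb j, smul_smul]
    refine ⟨p, ?_, μ, ?_⟩
    · intro hzero
      have := congrArg (fun z => c.repr z j₀) (hw'.symm.trans hzero)
      simp only [map_zero, Finsupp.coe_zero, Pi.zero_apply] at this
      rw [Module.Basis.repr_sum_self] at this
      rw [if_pos rfl] at this
      exact (mul_ne_zero hr₀ hevalμ) this
    · rw [hw', map_sum, Finset.smul_sum]
      refine Finset.sum_congr rfl fun j _ => ?_
      by_cases hjμ : LinearMap.toMatrix c c T j j = μ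
      · have hTcj : T (c j) = μ • c j := by
          have hdz : LinearMap.toMatrix c c T j j ≠ 0 := fun h => hμ ((h ▸ hjμ).symm)
          rcases struct c T h0 h1 j with hL | ⟨i, _, _, hjj, _, _⟩
          · rw [hL, hjμ]
          · exact absurd hjj hdz
        rw [map_smul, hTcj, smul_comm]
      · rw [if_neg hjμ, mul_zero, zero_smul, map_zero, smul_zero]
  · push_neg at hcase
    have hTn : (T ^ n) w = 0 := by
      conv_lhs => rw [← Module.Basis.sum_repr c w]
      rw [map_sum]
      refine Finset.sum_eq_zero fun j _ => ?_
      rcases eq_or_ne (c.repr w j) 0 with hz | hnz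
      · rw [hz, zero_smul, map_zero]
      · rw [map_smul, nilp c T h0 h1 n j (hcase j hnz) j.isLt, smul_zero]
    have hQ : ∃ k, (T ^ k) w = 0 := ⟨n, hTn⟩
    set m₀ := Nat.find hQ with hm₀
    have hm₀pos : m₀ ≠ 0 := by
      intro h
      have := Nat.find_spec hQ
      rw [← hm₀, h, pow_zero] at this
      exact hw (by simpa using this)
    obtain ⟨m, hm⟩ : ∃ m, m₀ = m + 1 := ⟨m₀ - 1, by omega⟩
    refine ⟨X ^ m, ?_, 0, ?_⟩
    · rw [aeval_X_pow]
      exact Nat.find_min hQ (by omega)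
    · rw [aeval_X_pow, zero_smul]
      have := Nat.find_spec hQ
      rw [← hm₀, hm, pow_succ', Module.End.mul_apply] at this
      exact this

end Stmt0Aux


/-- Jordan-form linear algebra lemma.  `V` is finite dimensional over a field `K`
with basis `b = (v_1, ..., v_n)`; `S` is a set of commuting endomorphisms such that
(after a reordering of the basis) the matrix of each `T ∈ S` is in Jordan canonical
form, with every Jordan block of size `> 1` having eigenvalue `0`.  `B'` is the set
of basis indices that are genuine eigenvectors for every `T ∈ S`, and the elements
of `B'` are distinguished by their `S`-eigenvalues.  If `W` is a subspace preserved
by every `T ∈ S`, then `W ≠ 0` iff `W` contains some `v_i` with `i ∈ B'`. -/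
theorem stmt0 (K V : Type*) [Field K] [AddCommGroup V] [Module K V]
    (n : ℕ) (b : Module.Basis (Fin n) K V)
    (S : Set (Module.End K V))
    (hcomm : ∀ T ∈ S, ∀ T' ∈ S, T * T' = T' * T)
    (hJordan : ∀ T ∈ S, ∃ e : Equiv.Perm (Fin n),
      (∀ i j : Fin n, j ≠ i → (j : ℕ) ≠ (i : ℕ) + 1 →
        LinearMap.toMatrix (b.reindex e) (b.reindex e) T i j = 0) ∧
      (∀ i j : Fin n, (j : ℕ) = (i : ℕ) + 1 →
        LinearMap.toMatrix (b.reindex e) (b.reindex e) T i j ≠ 0 →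
        LinearMap.toMatrix (b.reindex e) (b.reindex e) T i j = 1 ∧
        LinearMap.toMatrix (b.reindex e) (b.reindex e) T i i = 0 ∧
        LinearMap.toMatrix (b.reindex e) (b.reindex e) T j j = 0))
    (B' : Set (Fin n))
    (hB' : ∀ i, i ∈ B' ↔ ∀ T ∈ S, ∃ c : K, T (b i) = c • b i)
    (hdist : ∀ i ∈ B', ∀ j ∈ B', i ≠ j →
      ∃ T ∈ S, ∀ ci cj : K, T (b i) = ci • b i → T (b j) = cj • b j → ci ≠ cj)
    (W : Submodule K V)
    (hW : ∀ T ∈ S, ∀ w ∈ W, T w ∈ W) :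
    W ≠ ⊥ ↔ ∃ i ∈ B', b i ∈ W := by
  classical
  constructor
  · intro hne
    obtain ⟨w₀, hw₀W, hw₀⟩ := Submodule.exists_mem_ne_zero_of_ne_bot hne
    haveI : Module.Finite K V := Module.Finite.of_basis b
    -- a finite subset F of S with the same span
    have hfg : (Submodule.span K S).FG := IsNoetherian.noetherian _
    obtain ⟨G, hG⟩ := hfg
    have hGmem : ∀ g ∈ G, ∃ t : Finset (Module.End K V), ↑t ⊆ S ∧
        g ∈ Submodule.span K (t : Set (Module.End K V)) := by
      intro g hg
      exact Submodule.mem_span_finite_of_mem_span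
        (by rw [← hG]; exact Submodule.subset_span hg)
    choose! t ht1 ht2 using hGmem
    set F : Finset (Module.End K V) := G.biUnion t with hF
    have hFS : (F : Set (Module.End K V)) ⊆ S := by
      intro x hx
      simp only [hF, Finset.coe_biUnion, Set.mem_iUnion, Finset.mem_coe] at hx
      obtain ⟨g, hg, hxg⟩ := hx
      exact ht1 g hg hxg
    have hFspan : Submodule.span K S ≤ Submodule.span K (F : Set (Module.End K V)) := by
      rw [← hG, Submodule.span_le]
      intro g hg
      rw [Finset.mem_coe] at hg
      exact Submodule.span_mono
        (Finset.coe_subset.mpr (Finset.subset_biUnion_of_mem t hg)) (ht2 g hg)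
    -- process the elements of F one by one
    have procF : ∀ G' : Finset (Module.End K V), ↑G' ⊆ S →
        ∃ w', w' ∈ W ∧ w' ≠ 0 ∧ ∀ T ∈ G', ∃ γ : K, T w' = γ • w' := by
      intro G'
      induction G' using Finset.induction_on with
      | empty =>
        exact fun _ => ⟨w₀, hw₀W, hw₀, fun T hT => absurd hT (Finset.notMem_empty T)⟩
      | @insert a G' ha ih =>
        intro hsub
        have haS : a ∈ S := hsub (Finset.mem_insert_self a G')
        have hsub' : ↑G' ⊆ S := fun x hx => hsub (Finset.mem_insert_of_mem hx)
        obtain ⟨w1, hw1W, hw1, hG'⟩ := ih hsub'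
        obtain ⟨e, he0, he1⟩ := hJordan a haS
        obtain ⟨p, hpne, γ, hpeig⟩ := Stmt0Aux.process (b.reindex e) a he0 he1 w1 hw1
        refine ⟨(Polynomial.aeval a p) w1,
          Stmt0Aux.aeval_mem_submodule a W (hW a haS) p w1 hw1W, hpne, ?_⟩
        intro T hT
        rcases Finset.mem_insert.mp hT with rfl | hTG
        · exact ⟨γ, hpeig⟩
        · obtain ⟨γ', hγ'⟩ := hG' T hTG
          have hca : T * a = a * T := hcomm T (hsub' hTG) a haS
          exact ⟨γ', by rw [Stmt0Aux.aeval_comm_apply a T hca p w1, hγ', map_smul]⟩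
    obtain ⟨w, hwW, hwne, hFeig⟩ := procF F hFS
    -- every element of S acts on w as a scalar
    have eigenS : ∀ T ∈ S, ∃ γ : K, T w = γ • w := by
      intro T hTS
      have hTmem : T ∈ Submodule.span K (F : Set (Module.End K V)) :=
        hFspan (Submodule.subset_span hTS)
      refine Submodule.span_induction (p := fun x _ => ∃ γ : K, x w = γ • w)
        ?_ ?_ ?_ ?_ hTmem
      · intro x hx
        exact hFeig x (Finset.mem_coe.mp hx)
      · exact ⟨0, by simp⟩
      · rintro x y hx hy ⟨γ₁, h₁⟩ ⟨γ₂, h₂⟩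
        exact ⟨γ₁ + γ₂, by rw [LinearMap.add_apply, h₁, h₂, add_smul]⟩
      · rintro r x hx ⟨γ₁, h₁⟩
        exact ⟨r * γ₁, by rw [LinearMap.smul_apply, h₁, smul_smul]⟩
    -- each basis vector in the support of w lies in B'
    have hsupp : ∀ i ∈ (b.repr w).support, i ∈ B' := by
      intro i hi
      rw [hB' i]
      intro T hTS
      obtain ⟨γ, hγ⟩ := eigenS T hTS
      obtain ⟨e, he0, he1⟩ := hJordan T hTS
      have hrepr : (b.reindex e).repr w (e i) ≠ 0 := by
        rw [Module.Basis.repr_reindex_apply, Equiv.symm_apply_apply]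
        exact Finsupp.mem_support_iff.mp hi
      have hres := Stmt0Aux.eigen_of_repr (b.reindex e) T he0 he1 w γ hγ (e i) hrepr
      rw [Module.Basis.reindex_apply, Equiv.symm_apply_apply] at hres
      exact ⟨γ, hres⟩
    -- shrink the support to a single element of B'
    have shrink : ∀ s : ℕ, ∀ v : V, v ∈ W → v ≠ 0 → (b.repr v).support.card ≤ s →
        (∀ i ∈ (b.repr v).support, i ∈ B') → ∃ i ∈ B', b i ∈ W := by
      intro s
      induction s with
      | zero =>
        intro v hvW hv hcard _
        have h0' : b.repr v = 0 :=
          Finsupp.support_eq_empty.mp (Finset.card_eq_zero.mp (Nat.le_zero.mp hcard))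
        exact absurd (b.repr.map_eq_zero_iff.mp h0') hv
      | succ s ih =>
        intro v hvW hv hcard hsupB
        have hrne : (b.repr v).support.Nonempty :=
          Finsupp.support_nonempty_iff.mpr (fun h => hv (b.repr.map_eq_zero_iff.mp h))
        by_cases hone : (b.repr v).support.card ≤ 1
        · obtain ⟨i, hi⟩ := hrne
          have hsing : (b.repr v).support = {i} := by
            refine Finset.eq_singleton_iff_unique_mem.mpr ⟨hi, fun x hx => ?_⟩
            exact Finset.card_le_one.mp hone x hx i hi
          obtain ⟨hri, hrepr⟩ := Finsupp.support_eq_singleton.mp hsing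
          have hvi : v = b.repr v i • b i := by
            have hcg := congrArg b.repr.symm hrepr
            rw [b.repr.symm_apply_apply, Module.Basis.repr_symm_single] at hcg
            exact hcg
          refine ⟨i, hsupB i hi, ?_⟩
          have h2 : (b.repr v i)⁻¹ • v = b i := by
            calc (b.repr v i)⁻¹ • v
                = (b.repr v i)⁻¹ • ((b.repr v i) • b i) := by rw [← hvi]
              _ = b i := inv_smul_smul₀ hri _
          rw [← h2]
          exact Submodule.smul_mem W _ hvW
        · push_neg at hone
          obtain ⟨i, hi, j, hj, hij⟩ := Finset.one_lt_card.mp hone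
          obtain ⟨T, hTS, hTd⟩ := hdist i (hsupB i hi) j (hsupB j hj) hij
          have heig : ∀ k ∈ (b.repr v).support, ∃ cc : K, T (b k) = cc • b k :=
            fun k hk => (hB' k).mp (hsupB k hk) T hTS
          choose! γf hγf using heig
          have hcij : γf i ≠ γf j := hTd _ _ (hγf i hi) (hγf j hj)
          set v' := T v - γf j • v with hv'
          have hv'W : v' ∈ W :=
            Submodule.sub_mem W (hW T hTS v hvW) (Submodule.smul_mem W _ hvW)
          have hv'eq : v' = ∑ k, (b.repr v k * (γf k - γf j)) • b k := by
            rw [hv']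
            conv_lhs => rw [← Module.Basis.sum_repr b v]
            rw [map_sum, Finset.smul_sum, ← Finset.sum_sub_distrib]
            refine Finset.sum_congr rfl fun k _ => ?_
            rcases eq_or_ne (b.repr v k) 0 with hz | hnz
            · rw [hz, zero_smul, map_zero, smul_zero, sub_zero, zero_mul, zero_smul]
            · rw [map_smul, hγf k (Finsupp.mem_support_iff.mpr hnz), smul_smul,
                smul_smul, ← sub_smul, mul_comm (γf j), ← mul_sub]
          have hrv' : ∀ k, b.repr v' k = b.repr v k * (γf k - γf j) := by
            intro k
            rw [hv'eq]
            exact congrFun (Module.Basis.repr_sum_self b _) k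
          have hv'ne : v' ≠ 0 := by
            intro h
            have : b.repr v i * (γf i - γf j) = 0 := by
              rw [← hrv' i, h, map_zero]; rfl
            exact (mul_ne_zero (Finsupp.mem_support_iff.mp hi)
              (sub_ne_zero_of_ne hcij)) this
          have hsub' : (b.repr v').support ⊆ (b.repr v).support.erase j := by
            intro k hk
            have hkne := Finsupp.mem_support_iff.mp hk
            rw [hrv' k] at hkne
            refine Finset.mem_erase.mpr ⟨?_, Finsupp.mem_support_iff.mpr
              (fun h => hkne (by rw [h, zero_mul]))⟩
            rintro rfl
            exact hkne (by rw [sub_self, mul_zero])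
          refine ih v' hv'W hv'ne ?_ ?_
          · calc (b.repr v').support.card ≤ ((b.repr v).support.erase j).card :=
                Finset.card_le_card hsub'
              _ = (b.repr v).support.card - 1 := Finset.card_erase_of_mem hj
              _ ≤ s := by omega
          · intro k hk
            exact hsupB k (Finset.mem_erase.mp (hsub' hk)).2
    exact shrink n w hwW hwne (le_trans (Finset.card_le_univ _) (by simp)) hsupp
  · rintro ⟨i, _, hiW⟩ hbot
    rw [hbot, Submodule.mem_bot] at hiW
    exact b.ne_zero i hiW
end

section
/- Let O be a Dedekind domain with fraction field F, let b be a nonzero fractional ideal of O, and let m be a nonzero integral ideal. The set (b/bm)^* of elements of b/bm that generate b/bm as an O/m-module is a principal homogeneous space for the group (O/m)^* acting by multiplication; in particular, if it is nonempty then its cardinality equals that of (O/m)^*. -/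
open scoped nonZeroDivisors

/-- Ideal smul of a submodule of an algebra equals multiplication by the image submodule. -/
lemma aux_ideal_smul_eq_map_mul {O F : Type*} [CommRing O] [CommRing F] [Algebra O F]
    (m : Ideal O) (N : Submodule O F) :
    m • N = Submodule.map (Algebra.linearMap O F) m * N := by
  apply le_antisymm
  · refine Submodule.smul_le.2 fun r hr x hx => ?_
    rw [Algebra.smul_def]
    exact Submodule.mul_mem_mul ⟨r, hr, rfl⟩ hx
  · refine Submodule.mul_le.2 ?_
    rintro y ⟨s, hs, rfl⟩ x hx
    rw [Algebra.linearMap_apply, ← Algebra.smul_def]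
    exact Submodule.smul_mem_smul hs hx

/-- For a Dedekind domain `O` with fraction field `F`, a nonzero fractional ideal `b`
and a nonzero integral ideal `m`, the set `(b/bm)^*` of generators of the `O/m`-module
`b/bm` is a principal homogeneous space under `(O/m)^*` acting by multiplication:
the action is transitive and free; in particular, if it is nonempty its cardinality
equals that of `(O/m)^*`. -/
theorem stmt2 (O : Type*) [CommRing O] [IsDomain O] [IsDedekindDomain O]
    (F : Type*) [Field F] [Algebra O F] [IsFractionRing O F]
    (b : FractionalIdeal O⁰ F) (hb : b ≠ 0)
    (m : Ideal O) (hm : m ≠ ⊥) :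
    -- Q := (b/bm), the quotient of the module b by m•b
    ∀ (Q : Type _) (_ : AddCommGroup Q) (_ : Module O Q)
      (π : (b : Submodule O F) →ₗ[O] Q),
      Function.Surjective π →
      (LinearMap.ker π = m • (⊤ : Submodule O (b : Submodule O F))) →
      -- transitivity of the `(O/m)^*`-action on generators
      ((∀ x y : Q, Submodule.span O {x} = ⊤ → Submodule.span O {y} = ⊤ →
          ∃ u : O, IsUnit (Ideal.Quotient.mk m u) ∧ u • x = y) ∧
      -- freeness of the action
        (∀ x : Q, Submodule.span O {x} = ⊤ → ∀ u v : O, u • x = v • x →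
          Ideal.Quotient.mk m u = Ideal.Quotient.mk m v) ∧
      -- cardinality consequence
        ((∃ x : Q, Submodule.span O {x} = ⊤) →
          Nat.card {x : Q // Submodule.span O {x} = ⊤} = Nat.card ((O ⧸ m)ˣ))) := by
  intro Q _ _ π hsurj hker
  -- `b * b⁻¹ = 1` at the level of submodules
  have hBinv : ((b : Submodule O F)) * ((b⁻¹ : FractionalIdeal O⁰ F) : Submodule O F) = 1 := by
    rw [← FractionalIdeal.coe_mul, mul_inv_cancel₀ hb, FractionalIdeal.coe_one]
  -- elements of m kill Q
  have hk0 : ∀ r : O, r ∈ m → ∀ q : Q, r • q = 0 := by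
    intro r hr q
    obtain ⟨z, rfl⟩ := hsurj q
    rw [← map_smul, ← LinearMap.mem_ker, hker, Submodule.mem_smul_top_iff]
    exact Submodule.smul_mem_smul hr z.2
  -- elements killing Q lie in m
  have hk1 : ∀ r : O, (∀ q : Q, r • q = 0) → r ∈ m := by
    intro r hr
    have hrx : ∀ x ∈ (b : Submodule O F), r • x ∈ m • (b : Submodule O F) := by
      intro x hx
      have h0 : π (r • ⟨x, hx⟩) = 0 := by rw [map_smul]; exact hr _
      rw [← LinearMap.mem_ker, hker, Submodule.mem_smul_top_iff] at h0
      exact h0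
    have hle : (Ideal.span {r} : Ideal O) • (b : Submodule O F)
        ≤ m • (b : Submodule O F) := by
      refine Submodule.smul_le.2 fun s hs x hx => ?_
      obtain ⟨t, rfl⟩ := Ideal.mem_span_singleton'.1 hs
      rw [mul_smul]
      exact Submodule.smul_mem _ t (hrx x hx)
    rw [aux_ideal_smul_eq_map_mul, aux_ideal_smul_eq_map_mul] at hle
    have hle2 := mul_le_mul' hle
      (le_refl ((b⁻¹ : FractionalIdeal O⁰ F) : Submodule O F))
    rw [mul_assoc, mul_assoc, hBinv, mul_one, mul_one] at hle2
    obtain ⟨s, hs, hsr⟩ := hle2 ⟨r, Ideal.mem_span_singleton_self r, rfl⟩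
    rwa [show s = r from IsFractionRing.injective O F hsr] at hs
  -- if x generates and r • x = 0 then r ∈ m
  have hgen : ∀ x : Q, Submodule.span O {x} = ⊤ → ∀ r : O, r • x = 0 → r ∈ m := by
    intro x hx r h0
    refine hk1 r fun q => ?_
    have hq : q ∈ Submodule.span O {x} := hx ▸ Submodule.mem_top
    obtain ⟨t, rfl⟩ := Submodule.mem_span_singleton.1 hq
    rw [smul_smul, mul_comm, ← smul_smul, h0, smul_zero]
  -- congruent scalars act equally
  have hsm : ∀ u v : O, Ideal.Quotient.mk m u = Ideal.Quotient.mk m v →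
      ∀ q : Q, u • q = v • q := by
    intro u v h q
    have : (u - v) • q = 0 := hk0 _ (Ideal.Quotient.eq.1 h) q
    rwa [sub_smul, sub_eq_zero] at this
  -- transitivity
  have htrans : ∀ x y : Q, Submodule.span O {x} = ⊤ → Submodule.span O {y} = ⊤ →
      ∃ u : O, IsUnit (Ideal.Quotient.mk m u) ∧ u • x = y := by
    intro x y hx hy
    obtain ⟨a, ha⟩ := Submodule.mem_span_singleton.1
      (show y ∈ Submodule.span O {x} from hx ▸ Submodule.mem_top)
    obtain ⟨c, hc⟩ := Submodule.mem_span_singleton.1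
      (show x ∈ Submodule.span O {y} from hy ▸ Submodule.mem_top)
    refine ⟨a, ?_, ha⟩
    have hca : (c * a) • x = x := by rw [mul_smul, ha, hc]
    have hmem : c * a - 1 ∈ m := by
      refine hgen x hx _ ?_
      rw [sub_smul, one_smul, hca, sub_self]
    refine IsUnit.of_mul_eq_one (Ideal.Quotient.mk m c) ?_
    rw [← map_mul, mul_comm, ← map_one (Ideal.Quotient.mk m), Ideal.Quotient.eq]
    simpa using hmem
  -- freeness
  have hfree : ∀ x : Q, Submodule.span O {x} = ⊤ → ∀ u v : O, u • x = v • x →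
      Ideal.Quotient.mk m u = Ideal.Quotient.mk m v := by
    intro x hx u v huv
    refine Ideal.Quotient.eq.2 (hgen x hx _ ?_)
    rw [sub_smul, huv, sub_self]
  refine ⟨htrans, hfree, ?_⟩
  -- cardinality
  rintro ⟨x₀, hx₀⟩
  choose rep hrep using Ideal.Quotient.mk_surjective (I := m)
  have hgen' : ∀ a : O, IsUnit (Ideal.Quotient.mk m a) →
      Submodule.span O {a • x₀} = ⊤ := by
    intro a ha
    obtain ⟨c, hc⟩ := Ideal.Quotient.mk_surjective ((ha.unit⁻¹ : (O ⧸ m)ˣ) : O ⧸ m)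
    have h1 : (c * a) • x₀ = x₀ := by
      have : Ideal.Quotient.mk m (c * a) = Ideal.Quotient.mk m 1 := by
        rw [map_mul, hc, map_one]
        exact ha.val_inv_mul
      rw [hsm _ _ this, one_smul]
    have hx0mem : x₀ ∈ Submodule.span O {a • x₀} := by
      have h2 := Submodule.smul_mem (Submodule.span O {a • x₀}) c
        (Submodule.mem_span_singleton_self (a • x₀))
      rwa [smul_smul, h1] at h2
    refine top_le_iff.1 ?_
    rw [← hx₀]
    exact Submodule.span_le.2 (Set.singleton_subset_iff.2 hx0mem)
  let f : (O ⧸ m)ˣ → {x : Q // Submodule.span O {x} = ⊤} :=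
    fun u => ⟨rep ↑u • x₀, hgen' _ (by rw [hrep]; exact u.isUnit)⟩
  have hfbij : Function.Bijective f := by
    constructor
    · intro u v huv
      have : rep ↑u • x₀ = rep ↑v • x₀ := congrArg Subtype.val huv
      have h2 := hfree x₀ hx₀ _ _ this
      rw [hrep, hrep] at h2
      exact Units.ext h2
    · rintro ⟨x, hx⟩
      obtain ⟨a, ha, hax⟩ := htrans x₀ x hx₀ hx
      refine ⟨ha.unit, ?_⟩
      have : Ideal.Quotient.mk m (rep ↑ha.unit) = Ideal.Quotient.mk m a := by
        rw [hrep, ha.unit_spec]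
      refine Subtype.ext ?_
      show rep ↑ha.unit • x₀ = x
      rw [hsm _ _ this x₀, hax]
  exact Nat.card_congr (Equiv.ofBijective f hfbij).symm
end

section
/- Let F be a number field with ring of integers O_F, and let a, c ∈ F not both zero. Let t, d be nonzero fractional ideals of F, set b = aO_F + c(td)^{-1}, and define the integral ideals a_A = a·b^{-1} and c_A = c·(td·b)^{-1} (with the convention that the ideal generated by 0 is the zero ideal, so that if a = 0 then b = c(td)^{-1} and c_A = O_F). Then a_A and c_A are coprime integral ideals, i.e. a_A + c_A = O_F. -/
open NumberField FractionalIdeal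
open scoped nonZeroDivisors

/-- For a number field `F`, elements `a, c ∈ F` not both zero, nonzero fractional ideals
`t, d`, with `b = aO_F + c(td)⁻¹`, the ideals `a_A = a b⁻¹` and `c_A = c (t d b)⁻¹`
are coprime integral ideals: `a_A ≤ O_F`, `c_A ≤ O_F` and `a_A + c_A = O_F`. -/
theorem stmt3 (F : Type*) [Field F] [NumberField F]
    (a c : F) (h : ¬(a = 0 ∧ c = 0))
    (t d : FractionalIdeal (𝓞 F)⁰ F) (ht : t ≠ 0) (hd : d ≠ 0)
    (b : FractionalIdeal (𝓞 F)⁰ F)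
    (hb : b = spanSingleton (𝓞 F)⁰ a + spanSingleton (𝓞 F)⁰ c * (t * d)⁻¹) :
    spanSingleton (𝓞 F)⁰ a * b⁻¹ ≤ 1 ∧
    spanSingleton (𝓞 F)⁰ c * (t * d * b)⁻¹ ≤ 1 ∧
    spanSingleton (𝓞 F)⁰ a * b⁻¹ + spanSingleton (𝓞 F)⁰ c * (t * d * b)⁻¹ = 1 := by
  have htd : (t * d : FractionalIdeal (𝓞 F)⁰ F) ≠ 0 := mul_ne_zero ht hd
  have hb0 : b ≠ 0 := by
    intro h0
    rw [hb] at h0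
    rcases not_and_or.mp h with ha | hc
    · have h1 : spanSingleton (𝓞 F)⁰ a ≤ (0 : FractionalIdeal (𝓞 F)⁰ F) := by
        rw [← h0, ← sup_eq_add]; exact le_sup_left
      exact ha (spanSingleton_eq_zero_iff.mp (_root_.le_zero_iff.mp h1))
    · have h1 : spanSingleton (𝓞 F)⁰ c * (t * d)⁻¹ ≤ (0 : FractionalIdeal (𝓞 F)⁰ F) := by
        rw [← h0, ← sup_eq_add]; exact le_sup_right
      have h2 := _root_.le_zero_iff.mp h1
      rcases mul_eq_zero.mp h2 with h3 | h3
      · exact hc (spanSingleton_eq_zero_iff.mp h3)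
      · exact htd (inv_eq_zero.mp h3)
  have hainv : b * b⁻¹ = 1 := mul_inv_cancel₀ hb0
  have hale : spanSingleton (𝓞 F)⁰ a ≤ b := by rw [hb, ← sup_eq_add]; exact le_sup_left
  have hcle : spanSingleton (𝓞 F)⁰ c * (t * d)⁻¹ ≤ b := by rw [hb, ← sup_eq_add]; exact le_sup_right
  refine ⟨?_, ?_, ?_⟩
  · calc spanSingleton (𝓞 F)⁰ a * b⁻¹ ≤ b * b⁻¹ := mul_left_mono hale
      _ = 1 := hainv
  · calc spanSingleton (𝓞 F)⁰ c * (t * d * b)⁻¹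
        = spanSingleton (𝓞 F)⁰ c * (t * d)⁻¹ * b⁻¹ := by rw [mul_inv, mul_assoc]
      _ ≤ b * b⁻¹ := mul_left_mono hcle
      _ = 1 := hainv
  · calc spanSingleton (𝓞 F)⁰ a * b⁻¹ + spanSingleton (𝓞 F)⁰ c * (t * d * b)⁻¹
        = (spanSingleton (𝓞 F)⁰ a + spanSingleton (𝓞 F)⁰ c * (t * d)⁻¹) * b⁻¹ := by
          rw [mul_inv, ← mul_assoc, add_mul]
      _ = b * b⁻¹ := by rw [← hb]
      _ = 1 := hainv
end
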